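/- Let 1 < w₀ < w₁ and let f be a differentiable function on [w₀,w₁] with f(t) > 0 and f'(t) < 0 for all t ∈ [w₀,w₁]. Suppose t − 2·√t < θ(t) ≤ t for all t ∈ [w₀,w₁]. Then ∫_{w₀}^{w₁} (1 − 1/√t)·f(t) dt + ( w₀ − θ(w₀) − 2·√w₀ )·f(w₀) ≤ ∑_{w₀ < p ≤ w₁, p prime} f(p)·log p ≤ ∫_{w₀}^{w₁} f(t) dt + ( w₀ − θ(w₀) )·f(w₀). -/

import Mathlib

/-- Chebyshev's function `θ(x) = ∑_{p ≤ x, p prime} log p`. -/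
noncomputable def theta (x : ℝ) : ℝ :=
  ∑ p ∈ (Finset.range (⌊x⌋₊ + 1)).filter Nat.Prime, Real.log p

open MeasureTheory intervalIntegral

lemma theta_nonneg (x : ℝ) : 0 ≤ theta x := by
  refine Finset.sum_nonneg fun p hp => Real.log_nonneg ?_
  have := (Finset.mem_filter.mp hp).2.two_le
  exact_mod_cast Nat.one_le_iff_ne_zero.mpr (by omega)

lemma theta_mono : Monotone theta := by
  intro x y hxy
  refine Finset.sum_le_sum_of_subset_of_nonneg
    (Finset.filter_subset_filter _ (Finset.range_subset_range.mpr (by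
      have := Nat.floor_le_floor hxy; omega))) fun p hp _ => Real.log_nonneg ?_
  have := (Finset.mem_filter.mp hp).2.two_le
  exact_mod_cast Nat.one_le_iff_ne_zero.mpr (by omega)

theorem stmt_16 (w₀ w₁ : ℝ) (f : ℝ → ℝ) (hw₀ : 1 < w₀) (hw : w₀ < w₁)
    (hdiff : ∀ t ∈ Set.Icc w₀ w₁, DifferentiableAt ℝ f t)
    (hpos : ∀ t ∈ Set.Icc w₀ w₁, 0 < f t)
    (hder : ∀ t ∈ Set.Icc w₀ w₁, deriv f t < 0)
    (hθ : ∀ t ∈ Set.Icc w₀ w₁, t - 2 * Real.sqrt t < theta t ∧ theta t ≤ t) :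
    (∫ t in w₀..w₁, (1 - 1 / Real.sqrt t) * f t) +
        (w₀ - theta w₀ - 2 * Real.sqrt w₀) * f w₀
      ≤ (∑ p ∈ (Finset.range (⌊w₁⌋₊ + 1)).filter
            (fun p : ℕ => Nat.Prime p ∧ w₀ < (p : ℝ)), f p * Real.log p) ∧
    (∑ p ∈ (Finset.range (⌊w₁⌋₊ + 1)).filter
          (fun p : ℕ => Nat.Prime p ∧ w₀ < (p : ℝ)), f p * Real.log p)
      ≤ (∫ t in w₀..w₁, f t) + (w₀ - theta w₀) * f w₀ := by
  have hw00 : (0:ℝ) ≤ w₀ := by linarith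
  have hle : w₀ ≤ w₁ := hw.le
  have hmem₀ : w₀ ∈ Set.Icc w₀ w₁ := ⟨le_rfl, hle⟩
  have hmem₁ : w₁ ∈ Set.Icc w₀ w₁ := ⟨hle, le_rfl⟩
  have huIcc : Set.uIcc w₀ w₁ = Set.Icc w₀ w₁ := Set.uIcc_of_le hle
  set c : ℕ → ℝ := fun k => if Nat.Prime k then Real.log k else 0 with hc
  have hth : ∀ t : ℝ, (∑ k ∈ Finset.Icc 0 ⌊t⌋₊, c k) = theta t := by
    intro t
    rw [theta, Finset.sum_filter]
    refine Finset.sum_congr ?_ fun _ _ => rfl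
    ext k
    simp [Nat.lt_succ_iff]
  -- continuity / integrability facts
  have hfc : ContinuousOn f (Set.Icc w₀ w₁) := fun t ht =>
    (hdiff t ht).continuousAt.continuousWithinAt
  have hderInt : IntegrableOn (deriv f) (Set.Icc w₀ w₁) := by
    rw [integrableOn_Icc_iff_integrableOn_Ioc]
    have h := integrableOn_deriv_of_nonneg (g := fun t => -f t)
      (g' := fun t => -deriv f t) (hfc.neg)
      (fun x hx => ((hdiff x (Set.Ioo_subset_Icc_self hx)).hasDerivAt.neg))
      (fun x hx => neg_nonneg.mpr (hder x (Set.Ioo_subset_Icc_self hx)).le)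
    exact (MeasureTheory.integrable_neg_iff (f := deriv f)).mp h
  have hderII : IntervalIntegrable (deriv f) volume w₀ w₁ :=
    (intervalIntegrable_iff_integrableOn_Icc_of_le hle).mpr hderInt
  have hfII : IntervalIntegrable f volume w₀ w₁ :=
    ContinuousOn.intervalIntegrable (by rw [huIcc]; exact hfc)
  -- Abel summation
  have habel := sum_mul_eq_sub_sub_integral_mul c hw00 hle hdiff hderInt
  simp only [hth] at habel
  rw [← intervalIntegral.integral_of_le hle] at habel
  -- identify the sums
  have hset : (Finset.range (⌊w₁⌋₊ + 1)).filter (fun p : ℕ => Nat.Prime p ∧ w₀ < (p : ℝ))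
      = (Finset.Ioc ⌊w₀⌋₊ ⌊w₁⌋₊).filter Nat.Prime := by
    ext k
    simp only [Finset.mem_filter, Finset.mem_range, Finset.mem_Ioc, Nat.lt_succ_iff,
      Nat.floor_lt hw00]
    tauto
  have hsum : (∑ p ∈ (Finset.range (⌊w₁⌋₊ + 1)).filter
        (fun p : ℕ => Nat.Prime p ∧ w₀ < (p : ℝ)), f p * Real.log p)
      = ∑ k ∈ Finset.Ioc ⌊w₀⌋₊ ⌊w₁⌋₊, f k * c k := by
    rw [hset, Finset.sum_filter]
    exact Finset.sum_congr rfl fun k _ => by by_cases h : Nat.Prime k <;> simp [hc, h]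
  -- integrability of deriv f * theta
  have hθmeas : AEStronglyMeasurable theta (volume.restrict (Set.Icc w₀ w₁)) :=
    theta_mono.measurable.aestronglyMeasurable
  have hθbd : ∀ᵐ t ∂(volume.restrict (Set.Icc w₀ w₁)), ‖theta t‖ ≤ w₁ := by
    rw [ae_restrict_iff' measurableSet_Icc]
    refine Filter.Eventually.of_forall fun t ht => ?_
    rw [Real.norm_eq_abs, abs_of_nonneg (theta_nonneg t)]
    exact (hθ t ht).2.trans ht.2
  have hIθ : IntegrableOn (fun t => deriv f t * theta t) (Set.Icc w₀ w₁) := by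
    have := Integrable.bdd_mul hderInt hθmeas hθbd
    simpa [mul_comm, IntegrableOn] using this
  have hIθ' : IntervalIntegrable (fun t => deriv f t * theta t) volume w₀ w₁ :=
    (intervalIntegrable_iff_integrableOn_Icc_of_le hle).mpr hIθ
  -- sqrt facts
  have hg' : ∀ x ∈ Set.Icc w₀ w₁,
      HasDerivAt (fun t => t - 2 * Real.sqrt t) (1 - 1 / Real.sqrt x) x := by
    intro x hx
    have hx0 : 0 < x := by linarith [hx.1]
    have hs : Real.sqrt x ≠ 0 := by positivity
    have h := ((hasDerivAt_id x).sub ((Real.hasDerivAt_sqrt hx0.ne').const_mul 2))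
    refine h.congr_deriv ?_
    field_simp
  have hg'cont : ContinuousOn (fun t => 1 - 1 / Real.sqrt t) (Set.Icc w₀ w₁) := by
    refine continuousOn_const.sub (continuousOn_const.div
      Real.continuous_sqrt.continuousOn fun t ht => ?_)
    have : 0 < t := by linarith [ht.1]
    positivity
  -- integration by parts for t
  have hibp1 : ∫ t in w₀..w₁, t * deriv f t
      = w₁ * f w₁ - w₀ * f w₀ - ∫ t in w₀..w₁, f t := by
    have := intervalIntegral.integral_mul_deriv_eq_deriv_mul
      (u := fun t => t) (u' := fun _ => (1:ℝ)) (v := f) (v' := deriv f)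
      (fun x _ => hasDerivAt_id x)
      (fun x hx => (hdiff x (huIcc ▸ hx)).hasDerivAt)
      intervalIntegrable_const hderII
    simpa using this
  -- integration by parts for t - 2√t
  have hibp2 : ∫ t in w₀..w₁, (t - 2 * Real.sqrt t) * deriv f t
      = (w₁ - 2 * Real.sqrt w₁) * f w₁ - (w₀ - 2 * Real.sqrt w₀) * f w₀
        - ∫ t in w₀..w₁, (1 - 1 / Real.sqrt t) * f t := by
    exact intervalIntegral.integral_mul_deriv_eq_deriv_mul
      (fun x hx => hg' x (huIcc ▸ hx))
      (fun x hx => (hdiff x (huIcc ▸ hx)).hasDerivAt)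
      (ContinuousOn.intervalIntegrable (by rw [huIcc]; exact hg'cont)) hderII
  -- comparison integrals
  have hcmp1 : (∫ t in w₀..w₁, t * deriv f t) ≤ ∫ t in w₀..w₁, deriv f t * theta t := by
    refine intervalIntegral.integral_mono_on hle
      (hderII.continuousOn_mul (by rw [huIcc]; exact continuousOn_id)) hIθ' fun t ht => ?_
    rw [mul_comm t]
    exact mul_le_mul_of_nonpos_left (hθ t ht).2 (hder t ht).le
  have hcmp2 : (∫ t in w₀..w₁, deriv f t * theta t)
      ≤ ∫ t in w₀..w₁, (t - 2 * Real.sqrt t) * deriv f t := by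
    refine intervalIntegral.integral_mono_on hle hIθ'
      (hderII.continuousOn_mul (g := fun t => t - 2 * Real.sqrt t) (by rw [huIcc]; exact continuousOn_id.sub (continuousOn_const.mul Real.continuous_sqrt.continuousOn)))
      fun t ht => ?_
    rw [mul_comm (t - 2 * Real.sqrt t)]
    exact mul_le_mul_of_nonpos_left (hθ t ht).1.le (hder t ht).le
  have h1 : 0 ≤ f w₁ * (theta w₁ - (w₁ - 2 * Real.sqrt w₁)) :=
    le_of_lt (mul_pos (hpos w₁ hmem₁) (by linarith [(hθ w₁ hmem₁).1]))
  have h2 : 0 ≤ f w₁ * (w₁ - theta w₁) :=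
    mul_nonneg (hpos w₁ hmem₁).le (by linarith [(hθ w₁ hmem₁).2])
  constructor
  · rw [hsum, habel]
    nlinarith [hcmp2, hibp2, h1]
  · rw [hsum, habel]
    nlinarith [hcmp1, hibp1, h2]
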